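/- Let n ≥ 1, let ρ ≥ 0, d ≥ 0, J ≥ 0, and let T : Fin n → ℝ be monotone nondecreasing with 0 ≤ T(0), T(n−1) ≤ d, T(i+1) − T(i) ≤ J for all i < n−1, d + T(0) − T(n−1) ≤ J, and T(0) ≤ J. Define τ(i) = (1+ρ)·T(i+1) − (1−ρ)·T(i) for i < n−1, τ(n−1) = (1+ρ)·(d + T(0)) − (1−ρ)·T(n−1), and σ(i) = (1+ρ)·T(i) − (1−ρ)·T(i) for all i. Then max over all i of τ(i) and σ(i) is at most J + ρ·(J + 2·d). -/
import Mathlib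

/-- Proposition 3: with planned satisfaction times `T 0 ≤ … ≤ T (n-1)` within one
suffix cycle of duration `d`, planned cost `J`, and relative deviations bounded by
`ρ`, the worst-case actual gaps `τ i` (including the wrap-around gap) and spreads
`σ i` are all bounded by `J + ρ·(J + 2·d)`; i.e. their maximum is at most this. -/
theorem field_cost_bound (n : ℕ) (hn : 1 ≤ n) (ρ d J : ℝ)
    (hρ : 0 ≤ ρ) (hd : 0 ≤ d) (hJ : 0 ≤ J) (T : ℕ → ℝ)
    (hmono : ∀ i j, i ≤ j → j < n → T i ≤ T j)
    (h0 : 0 ≤ T 0) (hlast : T (n - 1) ≤ d)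
    (hgap : ∀ i, i < n - 1 → T (i + 1) - T i ≤ J)
    (hwrap : d + T 0 - T (n - 1) ≤ J)
    (hfirst : T 0 ≤ J) :
    (∀ i, i < n - 1 → (1 + ρ) * T (i + 1) - (1 - ρ) * T i ≤ J + ρ * (J + 2 * d)) ∧
      (1 + ρ) * (d + T 0) - (1 - ρ) * T (n - 1) ≤ J + ρ * (J + 2 * d) ∧
      (∀ i, i < n → (1 + ρ) * T i - (1 - ρ) * T i ≤ J + ρ * (J + 2 * d)) := by
  refine ⟨?_, ?_, ?_⟩
  · intro i hi
    have h1 : T (i + 1) ≤ T (n - 1) := hmono (i + 1) (n - 1) (by omega) (by omega)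
    have h2 : T 0 ≤ T i := hmono 0 i (by omega) (by omega)
    have h3 : T i ≤ T (i + 1) := hmono i (i + 1) (by omega) (by omega)
    have h4 := hgap i hi
    nlinarith
  · have h1 : T 0 ≤ T (n - 1) := hmono 0 (n - 1) (by omega) (by omega)
    nlinarith
  · intro i hi
    have h1 : T i ≤ T (n - 1) := hmono i (n - 1) (by omega) (by omega)
    have h2 : T 0 ≤ T i := hmono 0 i (by omega) (by omega)
    nlinarith
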